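/- Let (d_i)_{i≥0} be a sequence of positive integers such that d_0 = 1 and 1 ≤ d_{i+1} ≤ d_i^⟨i⟩ for all i ≥ 1. Then there exists an abelian semigroup G and a subset A ⊆ G such that d_h = |hA| for all h ≥ 0, where hA denotes the h-fold iterated sumset (with 0A a singleton). -/
import Mathlib


open scoped Pointwise

/-- `macaulay h a` is the Macaulay operator `a ↦ a^⟨h⟩`, computed via the greedy
construction of the `h`-binomial representation of `a`: writing
`a = C(a_h,h) + C(a_{h-1},h-1) + ⋯ + C(a_1,1)` with `a_h > a_{h-1} > ⋯ > a_1 ≥ 0`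
(where `a_h` is the largest integer with `C(a_h,h) ≤ a`, and so on), one sets
`a^⟨h⟩ = C(a_h+1,h+1) + C(a_{h-1}+1,h) + ⋯ + C(a_1+1,2)`, and `0^⟨h⟩ = 0`. -/
def macaulay : ℕ → ℕ → ℕ
  | 0, _ => 0
  | h + 1, a =>
    if a = 0 then 0
    else
      let m := Nat.findGreatest (fun k => Nat.choose k (h + 1) ≤ a) (a + h + 1)
      Nat.choose (m + 1) (h + 2) + macaulay h (a - Nat.choose m (h + 1))

/-- The `h`-fold iterated sumset `hA = A + ⋯ + A` (`h` summands), for `h ≥ 1`.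
(The value at `h = 0` is irrelevant; it is set to `A` by convention.) -/
def iterSumset {G : Type*} [AddCommSemigroup G] (A : Set G) : ℕ → Set G
  | 0 => A
  | 1 => A
  | h + 2 => iterSumset A (h + 1) + A

namespace Stmt16

open Finset

/-- number of monomials of degree `D` in `k` variables -/
def Nn (D k : ℕ) : ℕ := (D + k - 1).choose D

lemma Nn_pos {D k : ℕ} (hk : 1 ≤ k) : 0 < Nn D k := by
  apply Nat.choose_pos; omega

lemma Nn_one_left (k : ℕ) : Nn 1 k = k := by
  simp [Nn, Nat.choose_one_right]

lemma hockey (D k : ℕ) : ∑ j ∈ range (D + 1), (j + k).choose k = (D + k + 1).choose (k + 1) := by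
  induction D with
  | zero => simp
  | succ D ih =>
      rw [Finset.sum_range_succ, ih]
      have h2 : D + 1 + k = D + k + 1 := by omega
      rw [h2, Nat.choose_succ_succ' (D + k + 1) k]
      omega

lemma Nn_succ_right (D k : ℕ) : Nn D (k + 1) = ∑ c ∈ range (D + 1), Nn (D - c) k := by
  have hre : ∑ c ∈ range (D + 1), Nn (D - c) k = ∑ j ∈ range (D + 1), Nn j k := by
    rw [← Finset.sum_range_reflect (fun j => Nn j k) (D + 1)]
    apply Finset.sum_congr rfl
    intro i hi; simp only [Finset.mem_range] at hi; congr 1 <;> omega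
  rw [hre]
  rcases k with _ | k'
  · -- k = 0
    have h0 : ∀ j, Nn j 0 = if j = 0 then 1 else 0 := by
      intro j; rcases j with _ | j
      · simp [Nn]
      · simp only [Nn, if_neg (Nat.succ_ne_zero j)]
        exact Nat.choose_eq_zero_of_lt (by omega)
    rw [Finset.sum_congr rfl (fun j _ => h0 j)]
    rw [Finset.sum_ite_eq' (range (D + 1)) 0 (fun _ => 1)]
    simp [Nn]
  · -- k = k' + 1
    have h1 : ∀ j, Nn j (k' + 1) = (j + k').choose k' := by
      intro j; rw [Nn]
      have h2 : j + (k' + 1) - 1 = j + k' := by omega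
      rw [h2, ← Nat.choose_symm (by omega : j ≤ j + k')]
      congr 1; omega
    rw [Finset.sum_congr rfl (fun j _ => h1 j), hockey]
    rw [Nn]
    have h3 : D + (k' + 1 + 1) - 1 = D + k' + 1 := by omega
    rw [h3, ← Nat.choose_symm (by omega : D ≤ D + k' + 1)]
    congr 1; omega

lemma mac_zero (h : ℕ) : macaulay h 0 = 0 := by
  cases h <;> simp [macaulay]

lemma choose_lb (b k : ℕ) : b - k ≤ b.choose (k + 1) := by
  induction b with
  | zero => simp
  | succ b ih =>
      rcases le_or_gt b k with hb | hb
      · have h1 : b + 1 - k ≤ 1 := by omega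
        have h2 : 0 < (b + 1).choose (k + 1) ∨ b + 1 < k + 1 := by
          rcases le_or_gt (k + 1) (b + 1) with h | h
          · exact Or.inl (Nat.choose_pos h)
          · exact Or.inr h
        rcases h2 with h | h
        · omega
        · have : b + 1 - k = 0 := by omega
          omega
      · have hpos : 0 < b.choose k := Nat.choose_pos (by omega)
        rw [Nat.choose_succ_succ']
        omega

/-- The single-step split of the greedy binomial representation. -/
lemma mac_split (m b R : ℕ) (hR : R < b.choose m) :
    macaulay (m + 1) (b.choose (m + 1) + R) = (b + 1).choose (m + 2) + macaulay m R := by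
  by_cases hz : b.choose (m + 1) + R = 0
  · have h1 : b.choose (m + 1) = 0 := by omega
    have h2 : R = 0 := by omega
    have hb : b < m + 1 := by
      by_contra hc
      exact absurd h1 (Nat.choose_pos (by omega)).ne'
    rw [hz, h2, mac_zero, mac_zero]
    rw [Nat.choose_eq_zero_of_lt (by omega)]
  · set a := b.choose (m + 1) + R with ha
    have hbk : m + 1 ≤ b := by
      by_contra hc
      push_neg at hc
      have h1 : b.choose (m + 1) = 0 := Nat.choose_eq_zero_of_lt (by omega)
      rcases lt_or_eq_of_le (Nat.lt_succ_iff.mp hc) with h | h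
      · rw [Nat.choose_eq_zero_of_lt h] at hR; omega
      · subst h; rw [Nat.choose_self] at hR; omega
    have hble : b ≤ a + m + 1 := by
      have := choose_lb b m
      omega
    have hfg : Nat.findGreatest (fun j => Nat.choose j (m + 1) ≤ a) (a + m + 1) = b := by
      rw [Nat.findGreatest_eq_iff]
      refine ⟨hble, fun _ => by omega, ?_⟩
      intro j hj _
      simp only [not_le]
      calc a < (b + 1).choose (m + 1) := by
                rw [Nat.choose_succ_succ' b m]; omega
        _ ≤ j.choose (m + 1) := Nat.choose_le_choose _ (by omega)
    rw [macaulay]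
    simp only [hz, if_false, hfg]
    have hsub : a - b.choose (m + 1) = R := by omega
    rw [hsub]

/-- Iterated split along the "free block" decomposition. -/
lemma mac_iter_split (n : ℕ) (hn : 1 ≤ n) :
    ∀ e h R : ℕ, e ≤ h → R < Nn (h - e) n →
    macaulay h (∑ c ∈ range e, Nn (h - c) n + R)
      = ∑ c ∈ range e, Nn (h + 1 - c) n + macaulay (h - e) R := by
  intro e
  induction e with
  | zero => intro h R _ _; simp
  | succ e ih =>
      intro h R he hR
      obtain ⟨k, rfl⟩ : ∃ k, h = k + 1 := ⟨h - 1, by omega⟩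
      have hek : e ≤ k := by omega
      have hR' : R < Nn (k - e) n := by
        have hq : k + 1 - (e + 1) = k - e := by omega
        rwa [hq] at hR
      -- decompose the sum, peeling the first term
      have hdec : ∑ c ∈ range (e + 1), Nn (k + 1 - c) n
          = ∑ c ∈ range e, Nn (k - c) n + Nn (k + 1) n := by
        rw [Finset.sum_range_succ']
        have : ∀ i ∈ range e, Nn (k + 1 - (i + 1)) n = Nn (k - i) n := by
          intro i _; congr 1; omega
        rw [Finset.sum_congr rfl this]
        try norm_num
      have hrest : ∑ c ∈ range e, Nn (k - c) n + R < Nn k (n + 1) := by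
        have h1 : ∑ c ∈ range e, Nn (k - c) n + R < ∑ c ∈ range (e + 1), Nn (k - c) n := by
          rw [Finset.sum_range_succ]
          omega
        have h2 : ∑ c ∈ range (e + 1), Nn (k - c) n ≤ ∑ c ∈ range (k + 1), Nn (k - c) n := by
          apply Finset.sum_le_sum_of_subset
          apply Finset.range_subset_range.mpr; omega
        rw [Nn_succ_right]
        omega
      have hNk1 : Nn (k + 1) n = (k + n).choose (k + 1) := by
        rw [Nn]; congr 1 <;> omega
      have hNk : Nn k (n + 1) = (k + n).choose k := by
        rw [Nn]; congr 1 <;> omega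
      rw [hdec]
      have harr : ∑ c ∈ range e, Nn (k - c) n + Nn (k + 1) n + R
          = (k + n).choose (k + 1) + (∑ c ∈ range e, Nn (k - c) n + R) := by
        rw [hNk1]; ring
      rw [harr, mac_split k (k + n) _ (by rw [← hNk]; exact hrest)]
      have hIH := ih k R hek hR'
      rw [hIH]
      have hdec2 : ∑ c ∈ range (e + 1), Nn (k + 1 + 1 - c) n
          = ∑ c ∈ range e, Nn (k + 1 - c) n + Nn (k + 2) n := by
        rw [Finset.sum_range_succ']
        have : ∀ i ∈ range e, Nn (k + 1 + 1 - (i + 1)) n = Nn (k + 1 - i) n := by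
          intro i _; congr 1; omega
        rw [Finset.sum_congr rfl this]
        try norm_num
      rw [hdec2]
      have hNk2 : Nn (k + 2) n = (k + n + 1).choose (k + 2) := by
        rw [Nn]; congr 1 <;> omega
      have hq2 : k + 1 - (e + 1) = k - e := by omega
      rw [hq2, hNk2]
      ring

/-! ### Monomials as exponent vectors, and the rank function -/

def degv {n : ℕ} (u : Fin n → ℕ) : ℕ := ∑ i, u i

def rk : {n : ℕ} → (Fin n → ℕ) → ℕ
  | 0, _ => 0
  | n + 1, u => (∑ c ∈ Finset.range (u 0), Nn (degv u - c) n) + rk (Fin.tail u)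

lemma rk_succ {n : ℕ} (u : Fin (n + 1) → ℕ) :
    rk u = (∑ c ∈ Finset.range (u 0), Nn (degv u - c) n) + rk (Fin.tail u) := rfl

lemma degv_succ {n : ℕ} (u : Fin (n + 1) → ℕ) : degv u = u 0 + degv (Fin.tail u) := by
  rw [degv, Fin.sum_univ_succ]; rfl

lemma degv_add {n : ℕ} (u w : Fin n → ℕ) : degv (u + w) = degv u + degv w := by
  rw [degv, degv, degv, ← Finset.sum_add_distrib]; rfl

lemma tail_add {n : ℕ} (u w : Fin (n + 1) → ℕ) :
    Fin.tail (u + w) = Fin.tail u + Fin.tail w := rfl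

lemma u0_le_degv {n : ℕ} (u : Fin (n + 1) → ℕ) : u 0 ≤ degv u := by
  rw [degv_succ]; omega

lemma degv_tail {n : ℕ} (u : Fin (n + 1) → ℕ) : degv (Fin.tail u) = degv u - u 0 := by
  rw [degv_succ]; omega

/-- R0 : the rank is less than the number of monomials of the given degree. -/
lemma rk_lt : ∀ {n : ℕ} (u : Fin n → ℕ), rk u < Nn (degv u) n := by
  intro n
  induction n with
  | zero =>
      intro u
      have : degv u = 0 := by simp [degv]
      rw [this]
      simp [rk, Nn]
  | succ n ih =>
      intro u
      have h1 := ih (Fin.tail u)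
      rw [degv_tail] at h1
      have h2 : rk u < ∑ c ∈ Finset.range (u 0 + 1), Nn (degv u - c) n := by
        rw [Finset.sum_range_succ, rk_succ]
        omega
      have h3 : ∑ c ∈ Finset.range (u 0 + 1), Nn (degv u - c) n
          ≤ ∑ c ∈ Finset.range (degv u + 1), Nn (degv u - c) n := by
        apply Finset.sum_le_sum_of_subset
        apply Finset.range_subset_range.mpr
        have := u0_le_degv u; omega
      rw [Nn_succ_right]
      omega

/-- Rank is strictly monotone for the lexicographic comparison witnessed at index `i`. -/
lemma rk_lt_of_lex : ∀ {n : ℕ} (u v : Fin n → ℕ), degv u = degv v →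
    ∀ i : Fin n, (∀ j : Fin n, j < i → u j = v j) → u i < v i → rk u < rk v := by
  intro n
  induction n with
  | zero => intro u v _ i; exact i.elim0
  | succ n ih =>
      intro u v hdeg i hj hi
      rcases Fin.eq_zero_or_eq_succ i with rfl | ⟨j, rfl⟩
      · -- i = 0
        have h1 := rk_lt (Fin.tail u)
        rw [degv_tail] at h1
        have h2 : rk u < ∑ c ∈ Finset.range (u 0 + 1), Nn (degv u - c) n := by
          rw [Finset.sum_range_succ, rk_succ]
          omega
        have h3 : ∑ c ∈ Finset.range (u 0 + 1), Nn (degv u - c) n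
            ≤ ∑ c ∈ Finset.range (v 0), Nn (degv u - c) n := by
          apply Finset.sum_le_sum_of_subset
          apply Finset.range_subset_range.mpr
          omega
        have h4 : ∑ c ∈ Finset.range (v 0), Nn (degv u - c) n ≤ rk v := by
          rw [rk_succ, hdeg]
          omega
        omega
      · -- i = j.succ
        have h0 : u 0 = v 0 := hj 0 j.succ_pos
        have htd : degv (Fin.tail u) = degv (Fin.tail v) := by
          rw [degv_tail, degv_tail, hdeg, h0]
        have htl : rk (Fin.tail u) < rk (Fin.tail v) := by
          apply ih (Fin.tail u) (Fin.tail v) htd j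
          · intro j' hj'
            exact hj j'.succ (by simpa using hj')
          · exact hi
        rw [rk_succ, rk_succ, hdeg, h0]
        omega

/-- Adding a fixed vector preserves the (weak) rank order between same-degree vectors. -/
lemma rk_add_mono : ∀ {n : ℕ} (u v w : Fin n → ℕ), degv u = degv v → rk u ≤ rk v →
    rk (u + w) ≤ rk (v + w) := by
  intro n
  induction n with
  | zero => intro u v w _ _; simp [rk]
  | succ n ih =>
      intro u v w hdeg hr
      have hdadd : degv (u + w) = degv (v + w) := by
        rw [degv_add, degv_add, hdeg]
      rcases lt_trichotomy (u 0) (v 0) with h | h | h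
      · apply le_of_lt
        apply rk_lt_of_lex (u + w) (v + w) hdadd 0
        · intro j hj; exact absurd hj (by simp)
        · simp only [Pi.add_apply]; omega
      · -- equal heads
        have hS : ∑ c ∈ Finset.range (u 0), Nn (degv u - c) n
            = ∑ c ∈ Finset.range (v 0), Nn (degv v - c) n := by
          rw [h, hdeg]
        have htr : rk (Fin.tail u) ≤ rk (Fin.tail v) := by
          rw [rk_succ, rk_succ] at hr
          omega
        have htd : degv (Fin.tail u) = degv (Fin.tail v) := by
          rw [degv_tail, degv_tail, hdeg, h]
        have hIH := ih (Fin.tail u) (Fin.tail v) (Fin.tail w) htd htr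
        rw [rk_succ, rk_succ, tail_add, tail_add, hdadd]
        have h00 : (u + w) 0 = (v + w) 0 := by
          simp only [Pi.add_apply]; omega
        rw [h00]
        omega
      · exfalso
        have : rk v < rk u := by
          apply rk_lt_of_lex v u hdeg.symm 0
          · intro j hj; exact absurd hj (by simp)
          · exact h
        omega

lemma exists_greatest_partial (f : ℕ → ℕ) (a h : ℕ) (hf : f 0 ≤ a) :
    ∃ e ≤ h, f e ≤ a ∧ (e = h ∨ a < f (e + 1)) := by
  induction h with
  | zero => exact ⟨0, le_refl 0, hf, Or.inl rfl⟩
  | succ h ih =>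
      obtain ⟨e, he, hfe, hor⟩ := ih
      rcases hor with rfl | hlt
      · by_cases hc : f (e + 1) ≤ a
        · exact ⟨e + 1, le_refl _, hc, Or.inl rfl⟩
        · exact ⟨e, by omega, hfe, Or.inr (by omega)⟩
      · exact ⟨e, by omega, hfe, Or.inr hlt⟩

/-- R2 : every rank below the total count is attained. -/
lemma rk_surj : ∀ {n : ℕ} (h a : ℕ), a < Nn h n → ∃ u : Fin n → ℕ, degv u = h ∧ rk u = a := by
  intro n
  induction n with
  | zero =>
      intro h a ha
      rcases Nat.eq_zero_or_pos h with rfl | hpos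
      · have ha1 : a = 0 := by
          have h00 : Nn 0 0 = 1 := by simp [Nn]
          omega
        exact ⟨fun i => i.elim0, by simp [degv], by simp [rk, ha1]⟩
      · exfalso
        have : Nn h 0 = 0 := by
          rw [Nn]
          exact Nat.choose_eq_zero_of_lt (by omega)
        omega
  | succ n ih =>
      intro h a ha
      obtain ⟨e, heh, hSe, hor⟩ := exists_greatest_partial
        (fun e => ∑ c ∈ Finset.range e, Nn (h - c) n) a h (by simp)
      have hlt : a - ∑ c ∈ Finset.range e, Nn (h - c) n < Nn (h - e) n := by
        rcases hor with rfl | hlt'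
        · rw [Nn_succ_right] at ha
          have hss : ∑ c ∈ Finset.range (e + 1), Nn (e - c) n
              = ∑ c ∈ Finset.range e, Nn (e - c) n + Nn (e - e) n := Finset.sum_range_succ _ _
          omega
        · rw [Finset.sum_range_succ] at hlt'
          omega
      obtain ⟨ub, hubd, hubr⟩ := ih (h - e) (a - ∑ c ∈ Finset.range e, Nn (h - c) n) hlt
      refine ⟨Fin.cons e ub, ?_, ?_⟩
      · rw [degv_succ, Fin.cons_zero, Fin.tail_cons, hubd]
        omega
      · have hdd : degv (Fin.cons e ub : Fin (n+1) → ℕ) = h := by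
          rw [degv_succ, Fin.cons_zero, Fin.tail_cons, hubd]; omega
        rw [rk_succ, Fin.cons_zero, Fin.tail_cons, hubr, hdd]
        omega

/-- bump the last variable by one -/
def blast {n : ℕ} (u : Fin n → ℕ) : Fin n → ℕ :=
  fun i => if i.val = n - 1 then u i + 1 else u i

lemma degv_blast {n : ℕ} (hn : 1 ≤ n) (u : Fin n → ℕ) : degv (blast u) = degv u + 1 := by
  have h1 : ∀ i : Fin n, blast u i = u i + (if i.val = n - 1 then 1 else 0) := by
    intro i; rw [blast]; split <;> simp
  rw [degv, Finset.sum_congr rfl (fun i _ => h1 i), Finset.sum_add_distrib]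
  have h2 : (∑ i : Fin n, if i.val = n - 1 then (1:ℕ) else 0) = 1 := by
    have h3 : ∀ i : Fin n, (if i.val = n - 1 then (1:ℕ) else 0)
        = if i = (⟨n - 1, by omega⟩ : Fin n) then (1:ℕ) else 0 := by
      intro i
      by_cases hi : i.val = n - 1
      · rw [if_pos hi, if_pos (Fin.ext hi)]
      · rw [if_neg hi, if_neg (fun hc => hi (by rw [hc]))]
    rw [Finset.sum_congr rfl (fun i _ => h3 i),
      Finset.sum_ite_eq' Finset.univ (⟨n - 1, by omega⟩ : Fin n) (fun _ => 1)]
    simp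
  rw [h2]
  rfl

lemma tail_blast {n : ℕ} (hn : 1 ≤ n) (u : Fin (n + 1) → ℕ) :
    Fin.tail (blast u) = blast (Fin.tail u) := by
  funext j
  simp only [Fin.tail, blast]
  have : (j.succ : Fin (n+1)).val = j.val + 1 := rfl
  by_cases hj : j.val = n - 1
  · rw [if_pos (by omega), if_pos hj]
  · rw [if_neg (by omega), if_neg hj]

/-- M1 : multiplying by the smallest variable acts as the Macaulay operator on ranks. -/
lemma rk_blast : ∀ {n : ℕ}, 1 ≤ n → ∀ (u : Fin n → ℕ),
    rk (blast u) = macaulay (degv u) (rk u) := by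
  intro n
  induction n with
  | zero => omega
  | succ n ih =>
      intro _ u
      rcases Nat.eq_zero_or_pos n with rfl | hn
      · -- single variable : rank is always 0
        have h0 : ∀ v : Fin 1 → ℕ, rk v = 0 := by
          intro v
          rw [rk_succ]
          have hd : degv v = v 0 := by
            rw [degv_succ]
            have : degv (Fin.tail v) = 0 := by simp [degv]
            omega
          have : ∀ c ∈ Finset.range (v 0), Nn (degv v - c) 0 = 0 := by
            intro c hc
            simp only [Finset.mem_range] at hc
            rw [Nn]
            exact Nat.choose_eq_zero_of_lt (by omega)
          rw [Finset.sum_congr rfl this]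
          simp [rk]
        rw [h0 (blast u), h0 u, mac_zero]
      · -- n ≥ 1
        have hsplit := mac_iter_split n hn (u 0) (degv u) (rk (Fin.tail u))
          (u0_le_degv u) (by have := rk_lt (Fin.tail u); rwa [degv_tail] at this)
        have hbz : blast u 0 = u 0 := by
          rw [blast]
          have hne : ((0 : Fin (n+1)) : ℕ) ≠ n + 1 - 1 := by
            simp only [Fin.val_zero]; omega
          rw [if_neg hne]
        rw [rk_succ (blast u), hbz, degv_blast (by omega) u, tail_blast hn u,
          ih hn (Fin.tail u), degv_tail]
        conv_rhs => rw [rk_succ u]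
        rw [hsplit]

/-! ### Monotonicity consequences of M1 -/

lemma Nn_big {h b : ℕ} (hh : 1 ≤ h) : b < Nn h (b + 1) := by
  induction h with
  | zero => omega
  | succ h ih =>
      rcases Nat.eq_zero_or_pos h with rfl | hp
      · rw [Nn_one_left]; omega
      · have h1 : Nn (h + 1) (b + 1) = (h + b + 1).choose (h + 1) := by
          rw [Nn]; congr 1 <;> omega
        have h2 : Nn h (b + 1) = (h + b).choose h := by
          rw [Nn]; congr 1 <;> omega
        have h3 := Nat.choose_succ_succ' (h + b) h
        have h4 : (h + b).choose (h + 1) ≥ 0 := Nat.zero_le _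
        have := ih hp
        omega

lemma blast_eq_add {n : ℕ} (hn : 1 ≤ n) (u : Fin n → ℕ) :
    blast u = u + (fun i => if i.val = n - 1 then 1 else 0) := by
  funext i
  simp only [blast, Pi.add_apply]
  split <;> simp

lemma mac_mono {h a b : ℕ} (hab : a ≤ b) : macaulay h a ≤ macaulay h b := by
  rcases Nat.eq_zero_or_pos h with rfl | hh
  · simp [macaulay]
  · obtain ⟨u, hud, hur⟩ := rk_surj (n := b + 1) h a (lt_of_le_of_lt hab (Nn_big hh))
    obtain ⟨v, hvd, hvr⟩ := rk_surj (n := b + 1) h b (Nn_big hh)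
    have hm := rk_add_mono u v (fun i => if i.val = b + 1 - 1 then 1 else 0)
      (hud.trans hvd.symm) (by omega)
    rw [← blast_eq_add (by omega) u, ← blast_eq_add (by omega) v] at hm
    rw [rk_blast (by omega) u, rk_blast (by omega) v, hud, hvd, hur, hvr] at hm
    exact hm

lemma mac_Nn {h n : ℕ} (hh : 1 ≤ h) (hn : 1 ≤ n) : macaulay h (Nn h n) = Nn (h + 1) n := by
  obtain ⟨m, rfl⟩ : ∃ m, h = m + 1 := ⟨h - 1, by omega⟩
  have h1 : Nn (m + 1) n = (m + n).choose (m + 1) := by rw [Nn]; congr 1; omega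
  have h2 : Nn (m + 1 + 1) n = (m + n + 1).choose (m + 2) := by rw [Nn]; congr 1; omega
  have h3 := mac_split m (m + n) 0 (Nat.choose_pos (by omega))
  rw [h1, h2]
  simpa [mac_zero] using h3

/-! ### The step dynamics -/

section Dyn

variable {n : ℕ} (d : ℕ → ℕ)

/-- membership in the canonical transversal -/
def inT (u : Fin n → ℕ) : Prop := rk u < d (degv u)

instance (u : Fin n → ℕ) : Decidable (inT d u) := by unfold inT; infer_instance

/-- index of the largest variable occurring in `u` -/
noncomputable def mi (u : Fin n → ℕ) : ℕ := sInf {j : ℕ | ∃ hj : j < n, u ⟨j, hj⟩ ≠ 0}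

/-- replace one occurrence of the largest variable by the next one -/
noncomputable def stepv (u : Fin n → ℕ) : Fin n → ℕ := fun i =>
  if i.val = mi u then u i - 1 else if i.val = mi u + 1 then u i + 1 else u i

/-- termination measure -/
def muv (u : Fin n → ℕ) : ℕ := ∑ i, u i * (n - 1 - i.val)

variable {d}

lemma exists_ne_of_ne_zero {u : Fin n → ℕ} (hu : u ≠ 0) : ∃ i, u i ≠ 0 := by
  by_contra hc
  push_neg at hc
  exact hu (funext fun i => hc i)

lemma mi_mem {u : Fin n → ℕ} (hu : u ≠ 0) :
    ∃ hj : mi u < n, u ⟨mi u, hj⟩ ≠ 0 := by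
  have hne : {j : ℕ | ∃ hj : j < n, u ⟨j, hj⟩ ≠ 0}.Nonempty := by
    obtain ⟨i, hi⟩ := exists_ne_of_ne_zero hu
    exact ⟨i.val, i.isLt, by simpa using hi⟩
  exact Nat.sInf_mem hne

lemma mi_lt {u : Fin n → ℕ} (hu : u ≠ 0) : mi u < n := (mi_mem hu).1

lemma mi_apply_ne {u : Fin n → ℕ} (hu : u ≠ 0) {i : Fin n} (hi : i.val = mi u) : u i ≠ 0 := by
  obtain ⟨hj, hne⟩ := mi_mem hu
  have : i = ⟨mi u, hj⟩ := Fin.ext hi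
  rwa [this]

lemma mi_zero_of_lt {u : Fin n → ℕ} {i : Fin n} (hi : i.val < mi u) : u i = 0 := by
  by_contra hc
  have hmem : i.val ∈ {j : ℕ | ∃ hj : j < n, u ⟨j, hj⟩ ≠ 0} := ⟨i.isLt, by simpa using hc⟩
  have hle : mi u ≤ i.val := Nat.sInf_le hmem
  omega

lemma mi_eq {u : Fin n → ℕ} {m : ℕ} (hmn : m < n) (h1 : u ⟨m, hmn⟩ ≠ 0)
    (h2 : ∀ i : Fin n, i.val < m → u i = 0) : mi u = m := by
  have hu : u ≠ 0 := by
    intro hc; rw [hc] at h1; exact h1 rfl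
  have hle : mi u ≤ m := Nat.sInf_le ⟨hmn, h1⟩
  rcases eq_or_lt_of_le hle with h | h
  · exact h
  · exfalso
    have hmi : mi u < n := mi_lt hu
    have hz := h2 ⟨mi u, hmi⟩ (by simpa using h)
    exact mi_apply_ne hu (by simp) hz

lemma ind_sum {m c : ℕ} (hm : m < n) :
    (∑ i : Fin n, if i.val = m then c else 0) = c := by
  have h3 : ∀ i : Fin n, (if i.val = m then c else 0)
      = if i = (⟨m, hm⟩ : Fin n) then c else 0 := by
    intro i
    by_cases hi : i.val = m
    · rw [if_pos hi, if_pos (Fin.ext hi)]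
    · rw [if_neg hi, if_neg (fun hc => hi (by rw [hc]))]
  rw [Finset.sum_congr rfl (fun i _ => h3 i),
    Finset.sum_ite_eq' Finset.univ (⟨m, hm⟩ : Fin n) (fun _ => c)]
  simp

lemma degv_stepv {u : Fin n → ℕ} (hu : u ≠ 0) (hlt : mi u + 1 < n) :
    degv (stepv u) = degv u := by
  have hpw : ∀ i : Fin n, stepv u i + (if i.val = mi u then 1 else 0)
      = u i + (if i.val = mi u + 1 then 1 else 0) := by
    intro i
    rcases eq_or_ne i.val (mi u) with h | h
    · have h1 : u i ≠ 0 := mi_apply_ne hu h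
      rw [stepv, if_pos h, if_pos h, if_neg (by omega)]
      omega
    · rcases eq_or_ne i.val (mi u + 1) with h2 | h2
      · rw [stepv, if_neg h, if_pos h2, if_neg h, if_pos h2]
      · rw [stepv, if_neg h, if_neg h2, if_neg h, if_neg h2]
  have hsum : degv (stepv u) + (∑ i : Fin n, if i.val = mi u then 1 else 0)
      = degv u + (∑ i : Fin n, if i.val = mi u + 1 then 1 else 0) := by
    rw [degv, degv, ← Finset.sum_add_distrib, ← Finset.sum_add_distrib]
    exact Finset.sum_congr rfl (fun i _ => hpw i)
  rw [ind_sum (by omega), ind_sum hlt] at hsum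
  omega

lemma muv_stepv {u : Fin n → ℕ} (hu : u ≠ 0) (hlt : mi u + 1 < n) :
    muv (stepv u) < muv u := by
  have hpw : ∀ i : Fin n, stepv u i * (n - 1 - i.val) + (if i.val = mi u then n - 1 - mi u else 0)
      = u i * (n - 1 - i.val) + (if i.val = mi u + 1 then n - 1 - (mi u + 1) else 0) := by
    intro i
    rcases eq_or_ne i.val (mi u) with h | h
    · have h1 : u i ≠ 0 := mi_apply_ne hu h
      rw [stepv, if_pos h, if_pos h, if_neg (by omega), h]
      rcases Nat.exists_eq_succ_of_ne_zero h1 with ⟨a, ha⟩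
      rw [ha, Nat.succ_sub_one, Nat.succ_mul]
      omega
    · rcases eq_or_ne i.val (mi u + 1) with h2 | h2
      · rw [stepv, if_neg h, if_pos h2, if_neg h, if_pos h2, h2, add_mul, one_mul]
        omega
      · rw [stepv, if_neg h, if_neg h2, if_neg h, if_neg h2]
  have hsum : muv (stepv u) + (∑ i : Fin n, if i.val = mi u then n - 1 - mi u else 0)
      = muv u + (∑ i : Fin n, if i.val = mi u + 1 then n - 1 - (mi u + 1) else 0) := by
    rw [muv, muv, ← Finset.sum_add_distrib, ← Finset.sum_add_distrib]
    exact Finset.sum_congr rfl (fun i _ => hpw i)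
  rw [ind_sum (by omega), ind_sum hlt] at hsum
  omega

lemma rk_zero : rk (0 : Fin n → ℕ) = 0 := by
  induction n with
  | zero => rfl
  | succ n ih =>
      rw [rk_succ]
      simp only [Pi.zero_apply, Finset.range_zero, Finset.sum_empty]
      have : Fin.tail (0 : Fin (n+1) → ℕ) = 0 := rfl
      rw [this, ih]

lemma degv_zero : degv (0 : Fin n → ℕ) = 0 := by simp [degv]

lemma rk_one_var (v : Fin 1 → ℕ) : rk v = 0 := by
  rw [rk_succ]
  have hd : degv v = v 0 := by
    rw [degv_succ]
    have h0 : degv (Fin.tail v) = 0 := by simp [degv]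
    omega
  have hz : ∀ c ∈ Finset.range (v 0), Nn (degv v - c) 0 = 0 := by
    intro c hc
    simp only [Finset.mem_range] at hc
    rw [Nn]
    exact Nat.choose_eq_zero_of_lt (by omega)
  rw [Finset.sum_congr rfl hz]
  simp [rk]

lemma rk_bot : ∀ {n : ℕ} (u : Fin n → ℕ), (∀ i : Fin n, i.val < n - 1 → u i = 0) → rk u = 0 := by
  intro n
  induction n with
  | zero => intro u _; rfl
  | succ n ih =>
      intro u hyp
      rcases Nat.eq_zero_or_pos n with rfl | hn
      · exact rk_one_var u
      · have h0 : u 0 = 0 := hyp 0 (by simp; omega)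
        rw [rk_succ, h0]
        simp only [Finset.range_zero, Finset.sum_empty, zero_add]
        apply ih
        intro j hj
        exact hyp j.succ (by simp [Fin.val_succ]; omega)

variable (hpos : ∀ i : ℕ, 1 ≤ d i) (hd0 : d 0 = 1)

include hpos hd0 in
lemma not_inT_struct {u : Fin n → ℕ} (hni : ¬ inT d u) : u ≠ 0 ∧ mi u + 1 < n := by
  have hu : u ≠ 0 := by
    intro hc
    apply hni
    rw [hc, inT, rk_zero, degv_zero, hd0]
    omega
  refine ⟨hu, ?_⟩
  have hn := mi_lt hu
  by_contra hc
  have hmi : mi u = n - 1 := by omega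
  have : rk u = 0 := rk_bot u (fun i hi => mi_zero_of_lt (by omega))
  exact hni (by rw [inT, this]; exact hpos _)

variable (d) in
noncomputable def phiF : ℕ → (Fin n → ℕ) → (Fin n → ℕ)
  | 0, u => u
  | f + 1, u => if inT d u then u else phiF f (stepv u)

lemma phiF_succ (f : ℕ) (u : Fin n → ℕ) :
    phiF d (f + 1) u = if inT d u then u else phiF d f (stepv u) := rfl

variable (d) in
noncomputable def phi (u : Fin n → ℕ) : Fin n → ℕ := phiF d (muv u + 1) u

include hpos hd0 in
lemma phiF_congr : ∀ (f₁ : ℕ) {f₂ : ℕ} (u : Fin n → ℕ), muv u < f₁ → muv u < f₂ →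
    phiF d f₁ u = phiF d f₂ u := by
  intro f₁
  induction f₁ with
  | zero => intro f₂ u h1 _; omega
  | succ f ih =>
      intro f₂ u h1 h2
      obtain ⟨g, rfl⟩ : ∃ g, f₂ = g + 1 := ⟨f₂ - 1, by omega⟩
      by_cases hT : inT d u
      · simp only [phiF_succ, if_pos hT]
      · obtain ⟨hu, hlt⟩ := not_inT_struct hpos hd0 hT
        have hmu := muv_stepv hu hlt
        simp only [phiF_succ, if_neg hT]
        refine ih (stepv u) ?_ ?_ <;> omega

include hpos hd0 in
lemma phi_eq (u : Fin n → ℕ) :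
    phi d u = if inT d u then u else phi d (stepv u) := by
  by_cases hT : inT d u
  · rw [if_pos hT]
    show phiF d (muv u + 1) u = u
    rw [phiF_succ, if_pos hT]
  · rw [if_neg hT]
    obtain ⟨hu, hlt⟩ := not_inT_struct hpos hd0 hT
    have hmu := muv_stepv hu hlt
    show phiF d (muv u + 1) u = phiF d (muv (stepv u) + 1) (stepv u)
    rw [phiF_succ, if_neg hT]
    refine phiF_congr hpos hd0 _ (stepv u) ?_ ?_ <;> omega

include hpos hd0 in
lemma phi_spec (u : Fin n → ℕ) : inT d (phi d u) ∧ degv (phi d u) = degv u := by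
  obtain ⟨m, hm⟩ : ∃ m, muv u ≤ m := ⟨muv u, le_refl _⟩
  induction m generalizing u with
  | zero =>
      rw [phi_eq hpos hd0]
      by_cases hT : inT d u
      · rw [if_pos hT]; exact ⟨hT, rfl⟩
      · obtain ⟨hu, hlt⟩ := not_inT_struct hpos hd0 hT
        have := muv_stepv hu hlt
        omega
  | succ m ih =>
      rw [phi_eq hpos hd0]
      by_cases hT : inT d u
      · rw [if_pos hT]; exact ⟨hT, rfl⟩
      · obtain ⟨hu, hlt⟩ := not_inT_struct hpos hd0 hT
        have h1 := muv_stepv hu hlt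
        have h2 := degv_stepv hu hlt
        rw [if_neg hT]
        obtain ⟨ha, hb⟩ := ih (stepv u) (by omega)
        exact ⟨ha, by rw [hb, h2]⟩

include hpos hd0 in
lemma phi_of_inT {u : Fin n → ℕ} (hT : inT d u) : phi d u = u := by
  rw [phi_eq hpos hd0, if_pos hT]

lemma degv_pos_of_ne_zero {u : Fin n → ℕ} (hu : u ≠ 0) : 1 ≤ degv u := by
  obtain ⟨i, hi⟩ := exists_ne_of_ne_zero hu
  have h1 : u i ≤ degv u := Finset.single_le_sum (fun j _ => Nat.zero_le (u j)) (Finset.mem_univ i)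
  omega

lemma ne_zero_of_degv_pos {u : Fin n → ℕ} (hu : 1 ≤ degv u) : u ≠ 0 := by
  intro hc; rw [hc, degv_zero] at hu; omega

lemma degv_single (j : Fin n) : degv (Pi.single j (1:ℕ)) = 1 := by
  rw [degv]
  rw [Finset.sum_pi_single' j (1:ℕ) Finset.univ]
  simp

lemma stepv_zero_below {u : Fin n → ℕ} {i : Fin n} (hi : i.val < mi u) : stepv u i = 0 := by
  rw [stepv, if_neg (by omega), if_neg (by omega)]
  exact mi_zero_of_lt hi

lemma stepv_add_left {u v : Fin n → ℕ} (hu : u ≠ 0)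
    (hv0 : ∀ i : Fin n, i.val < mi u → v i = 0) :
    mi (u + v) = mi u ∧ stepv (u + v) = stepv u + v := by
  have hmilt := mi_lt hu
  have hmi : mi (u + v) = mi u := by
    apply mi_eq hmilt
    · have h1 : u ⟨mi u, hmilt⟩ ≠ 0 := mi_apply_ne hu (by simp)
      simp only [Pi.add_apply]
      omega
    · intro i hi
      simp only [Pi.add_apply]
      rw [mi_zero_of_lt hi, hv0 i hi]
  refine ⟨hmi, ?_⟩
  funext i
  simp only [stepv, hmi, Pi.add_apply]
  rcases eq_or_ne i.val (mi u) with h | h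
  · rw [if_pos h, if_pos h]
    have : u i ≠ 0 := mi_apply_ne hu h
    omega
  · rcases eq_or_ne i.val (mi u + 1) with h2 | h2
    · rw [if_neg h, if_pos h2, if_neg h, if_pos h2]
      omega
    · rw [if_neg h, if_neg h2, if_neg h, if_neg h2]

lemma stepv_add_right {u v : Fin n → ℕ} (hv : v ≠ 0)
    (hu0 : ∀ i : Fin n, i.val < mi v → u i = 0) :
    mi (u + v) = mi v ∧ stepv (u + v) = u + stepv v := by
  have h := stepv_add_left hv hu0
  rw [add_comm v u] at h
  exact ⟨h.1, by rw [h.2, add_comm]⟩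

lemma degv_ind {m c : ℕ} (hm : m < n) :
    degv (fun i : Fin n => if i.val = m then c else 0) = c := by
  rw [degv]; exact ind_sum hm

variable (hd : ∀ i : ℕ, 1 ≤ i → d (i + 1) ≤ macaulay i (d i))

include hpos hd0 hd in
lemma not_inT_single {u : Fin n → ℕ} (hT : ¬ inT d u) (j : Fin n) :
    ¬ inT d (u + Pi.single j 1) := by
  obtain ⟨hu, hmilt⟩ := not_inT_struct hpos hd0 hT
  have hn2 : 2 ≤ n := by have := mi_lt hu; omega
  have hh1 : 1 ≤ degv u := degv_pos_of_ne_zero hu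
  have hlast : n - 1 < n := by omega
  -- u + single last = blast u
  have hbl : u + Pi.single (⟨n - 1, hlast⟩ : Fin n) 1 = blast u := by
    funext i
    simp only [Pi.add_apply, blast, Pi.single_apply]
    by_cases hi : i.val = n - 1
    · rw [if_pos (Fin.ext hi), if_pos hi]
    · rw [if_neg (fun hc => hi (by rw [hc])), if_neg hi]
      omega
  have hrk_last : rk (u + Pi.single (⟨n - 1, hlast⟩ : Fin n) 1) = macaulay (degv u) (rk u) := by
    rw [hbl, rk_blast (by omega)]
  have hdeg : degv (u + Pi.single j 1) = degv u + 1 := by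
    rw [degv_add, degv_single]
  have hrk_ge : macaulay (degv u) (rk u) ≤ rk (u + Pi.single j 1) := by
    rcases eq_or_ne j (⟨n - 1, hlast⟩ : Fin n) with rfl | hj
    · rw [hrk_last]
    · have hjn : j.val < n - 1 := by
        have h1 : j.val < n := j.isLt
        rcases Nat.lt_or_ge j.val (n - 1) with h' | h'
        · exact h'
        · exact absurd (Fin.ext (by omega : j.val = n - 1)) hj
      rw [← hrk_last]
      apply le_of_lt
      apply rk_lt_of_lex _ _ (by rw [degv_add, degv_add, degv_single, degv_single]) j
      · intro i hij
        have hij' : i.val < j.val := hij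
        simp only [Pi.add_apply, Pi.single_apply]
        rw [if_neg (fun hc : i = j => by subst hc; omega)]
        rw [if_neg (fun hc : i = (⟨n-1, hlast⟩ : Fin n) => by
          have h5 : i.val = n - 1 := by rw [hc]
          omega)]
      · simp only [Pi.add_apply, Pi.single_apply]
        rw [if_neg hj]
        simp
  have hmac : d (degv u + 1) ≤ macaulay (degv u) (rk u) := by
    calc d (degv u + 1) ≤ macaulay (degv u) (d (degv u)) := hd (degv u) hh1
      _ ≤ macaulay (degv u) (rk u) := mac_mono (by rw [inT, not_lt] at hT; exact hT)
  rw [inT, hdeg, not_lt]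
  omega

include hpos hd0 hd in
lemma not_inT_add {u : Fin n → ℕ} (hT : ¬ inT d u) (v : Fin n → ℕ) :
    ¬ inT d (u + v) := by
  obtain ⟨m, hm⟩ : ∃ m, degv v ≤ m := ⟨degv v, le_refl _⟩
  induction m generalizing v with
  | zero =>
      have hv : v = 0 := by
        funext i
        have h1 : v i ≤ degv v := Finset.single_le_sum (fun j _ => Nat.zero_le (v j)) (Finset.mem_univ i)
        simp; omega
      rw [hv, add_zero]; exact hT
  | succ m ih =>
      rcases Nat.eq_zero_or_pos (degv v) with h0 | h0
      · have hv : v = 0 := by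
          funext i
          have h1 : v i ≤ degv v := Finset.single_le_sum (fun j _ => Nat.zero_le (v j)) (Finset.mem_univ i)
          simp; omega
        rw [hv, add_zero]; exact hT
      · obtain ⟨j, hj⟩ := exists_ne_of_ne_zero (ne_zero_of_degv_pos h0)
        obtain ⟨v', hv'⟩ : ∃ v' : Fin n → ℕ, v' = fun i => if i = j then v i - 1 else v i :=
          ⟨_, rfl⟩
        have hsplit : v = v' + Pi.single j 1 := by
          funext i
          simp only [hv', Pi.add_apply, Pi.single_apply]
          by_cases hi : i = j
          · subst hi; rw [if_pos rfl, if_pos rfl]; omega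
          · rw [if_neg hi, if_neg hi]; omega
        have hdv' : degv v' + 1 = degv v := by
          have hda := degv_add v' (Pi.single j 1)
          rw [← hsplit, degv_single] at hda
          omega
        have h1 : ¬ inT d (u + v') := ih v' (by omega)
        have h2 := not_inT_single hpos hd0 hd h1 j
        rw [hsplit, ← add_assoc]
        exact h2

lemma muv_pos_of_small_mi {v : Fin n → ℕ} (hv : v ≠ 0) (hlt : mi v + 1 < n) : 1 ≤ muv v := by
  have hmilt := mi_lt hv
  have h1 : v ⟨mi v, hmilt⟩ ≠ 0 := mi_apply_ne hv (by simp)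
  have h2 : v ⟨mi v, hmilt⟩ * (n - 1 - mi v) ≤ muv v := by
    rw [muv]
    exact Finset.single_le_sum (f := fun i : Fin n => v i * (n - 1 - i.val))
      (fun j _ => Nat.zero_le _) (Finset.mem_univ (⟨mi v, hmilt⟩ : Fin n))
  have h3 : 1 ≤ n - 1 - mi v := by omega
  have h4 : 1 ≤ v ⟨mi v, hmilt⟩ * (n - 1 - mi v) :=
    Nat.one_le_iff_ne_zero.mpr (by
      intro hc
      rcases Nat.mul_eq_zero.mp hc with hc' | hc' <;> omega)
  omega

include hpos hd0 hd in
/-- KEY : `phi` identifies `u + v` with `stepv u + v` when `u` is not in the transversal. -/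
lemma phi_step_add : ∀ (m : ℕ) (u v : Fin n → ℕ), muv v ≤ m → ¬ inT d u → v ≠ 0 →
    phi d (u + v) = phi d (stepv u + v) := by
  intro m
  induction m with
  | zero =>
      intro u v hm hT hv
      obtain ⟨hu, hmiu⟩ := not_inT_struct hpos hd0 hT
      rcases le_or_gt (mi u) (mi v) with hpq | hqp
      · have hv0 : ∀ i : Fin n, i.val < mi u → v i = 0 := fun i hi =>
          mi_zero_of_lt (by omega)
        obtain ⟨_, hst⟩ := stepv_add_left hu hv0
        have huv : ¬ inT d (u + v) := not_inT_add hpos hd0 hd hT v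
        rw [phi_eq hpos hd0 (u + v), if_neg huv, hst]
      · exfalso
        have := muv_pos_of_small_mi hv (by omega)
        omega
  | succ m ih =>
      intro u v hm hT hv
      obtain ⟨hu, hmiu⟩ := not_inT_struct hpos hd0 hT
      rcases le_or_gt (mi u) (mi v) with hpq | hqp
      · have hv0 : ∀ i : Fin n, i.val < mi u → v i = 0 := fun i hi =>
          mi_zero_of_lt (by omega)
        obtain ⟨_, hst⟩ := stepv_add_left hu hv0
        have huv : ¬ inT d (u + v) := not_inT_add hpos hd0 hd hT v
        rw [phi_eq hpos hd0 (u + v), if_neg huv, hst]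
      · -- mi v < mi u
        have hqn : mi v < n := mi_lt hv
        have hp1 : 1 ≤ mi u := by omega
        have hplt : mi u - 1 < n := by omega
        have hvq : v ⟨mi v, hqn⟩ ≠ 0 := mi_apply_ne hv (by simp)
        -- decompose v into low part and tail part
        obtain ⟨vt, hvt⟩ : ∃ vt : Fin n → ℕ, vt = fun i => if i.val < mi u then 0 else v i :=
          ⟨_, rfl⟩
        obtain ⟨low, hlow⟩ : ∃ low : Fin n → ℕ, low = fun i => if i.val < mi u then v i else 0 :=
          ⟨_, rfl⟩
        have hvti : ∀ i : Fin n, vt i = if i.val < mi u then 0 else v i := fun i => by rw [hvt]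
        have hlowi : ∀ i : Fin n, low i = if i.val < mi u then v i else 0 := fun i => by rw [hlow]
        have hvsplit : v = low + vt := by
          funext i
          simp only [Pi.add_apply, hvti, hlowi]
          split_ifs <;> omega
        obtain ⟨mlow, hmlow⟩ : ∃ m, m = degv low := ⟨_, rfl⟩
        have hmlow1 : 1 ≤ mlow := by
          rw [hmlow]
          apply degv_pos_of_ne_zero
          intro hc
          have h5 : low ⟨mi v, hqn⟩ = 0 := by rw [hc]; rfl
          rw [hlowi] at h5
          rw [if_pos (by simp; omega)] at h5
          exact hvq h5
        -- the cascaded monomials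
        obtain ⟨wb, hwb⟩ : ∃ wb : Fin n → ℕ,
            wb = (fun i : Fin n => if i.val = mi u then mlow else 0) + vt := ⟨_, rfl⟩
        obtain ⟨wba, hwba⟩ : ∃ wba : Fin n → ℕ,
            wba = (fun i : Fin n => if i.val = mi u - 1 then 1 else 0)
              + (fun i : Fin n => if i.val = mi u then mlow - 1 else 0) + vt := ⟨_, rfl⟩
        have hwbi : ∀ i : Fin n, wb i
            = (if i.val = mi u then mlow else 0) + (if i.val < mi u then 0 else v i) := by
          intro i; rw [hwb]; simp only [Pi.add_apply, hvti]
        have hwbai : ∀ i : Fin n, wba i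
            = (if i.val = mi u - 1 then 1 else 0) + (if i.val = mi u then mlow - 1 else 0)
              + (if i.val < mi u then 0 else v i) := by
          intro i; rw [hwba]; simp only [Pi.add_apply, hvti]
        have hdegwb : degv wb = mlow + degv vt := by
          rw [hwb, degv_add, degv_ind (show mi u < n by omega)]
        have hdegwba : degv wba = mlow + degv vt := by
          rw [hwba, degv_add, degv_add, degv_ind hplt, degv_ind (show mi u < n by omega)]
          omega
        have hdegv : degv v = mlow + degv vt := by
          rw [hvsplit, degv_add, hmlow]
        -- Û not in T
        have hU : ¬ inT d (u + wb) := not_inT_add hpos hd0 hd hT wb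
        -- rk Û < rk Z₀
        have hdegZ : degv (u + wb) = degv (stepv u + wba) := by
          rw [degv_add, degv_add, hdegwb, hdegwba, degv_stepv hu (by omega)]
        have hZU : rk (u + wb) < rk (stepv u + wba) := by
          apply rk_lt_of_lex _ _ hdegZ ⟨mi u - 1, hplt⟩
          · intro i hij
            have hiv : i.val < mi u - 1 := hij
            simp only [Pi.add_apply]
            rw [mi_zero_of_lt (show i.val < mi u by omega),
                stepv_zero_below (show i.val < mi u by omega), hwbi, hwbai]
            split_ifs <;> omega
          · simp only [Pi.add_apply]
            rw [mi_zero_of_lt (show ((⟨mi u - 1, hplt⟩ : Fin n) : ℕ) < mi u by simp; omega),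
                stepv_zero_below (show ((⟨mi u - 1, hplt⟩ : Fin n) : ℕ) < mi u by simp; omega),
                hwbi, hwbai]
            have hval : ((⟨mi u - 1, hplt⟩ : Fin n) : ℕ) = mi u - 1 := rfl
            rw [hval]
            split_ifs <;> omega
        -- rk wba ≤ rk v  (same degree)
        have hdwv : degv wba = degv v := by rw [hdegwba, hdegv]
        have hwv : rk wba ≤ rk v := by
          rcases lt_or_eq_of_le (show mi v ≤ mi u - 1 by omega) with hq1 | hq2
          · -- mi v < mi u - 1, strict at index mi v
            apply le_of_lt
            apply rk_lt_of_lex _ _ hdwv ⟨mi v, hqn⟩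
            · intro i hij
              have hiv : i.val < mi v := hij
              rw [hwbai, mi_zero_of_lt (show i.val < mi v from hiv)]
              split_ifs <;> omega
            · rw [hwbai]
              have hval : ((⟨mi v, hqn⟩ : Fin n) : ℕ) = mi v := rfl
              rw [hval]
              have h6 : v ⟨mi v, hqn⟩ ≠ 0 := hvq
              split_ifs <;> omega
          · -- mi v = mi u - 1
            have hml : mlow = v ⟨mi v, hqn⟩ := by
              rw [hmlow, degv]
              have hlo : ∀ i : Fin n,
                  low i = if i = (⟨mi v, hqn⟩ : Fin n) then v ⟨mi v, hqn⟩ else 0 := by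
                intro i
                rw [hlowi]
                by_cases hi : i = (⟨mi v, hqn⟩ : Fin n)
                · subst hi; rw [if_pos (by simp; omega), if_pos rfl]
                · rw [if_neg hi]
                  by_cases hip : i.val < mi u
                  · rw [if_pos hip]
                    apply mi_zero_of_lt
                    have h7 : i.val ≠ mi v := fun hc => hi (Fin.ext hc)
                    omega
                  · rw [if_neg hip]
              rw [Finset.sum_congr rfl (fun i _ => hlo i),
                Finset.sum_ite_eq' Finset.univ (⟨mi v, hqn⟩ : Fin n) (fun _ => v ⟨mi v, hqn⟩)]
              simp
            rcases eq_or_lt_of_le hmlow1 with hm1 | hm2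
            · -- mlow = 1 : wba = v
              have hwv_eq : wba = v := by
                funext i
                rw [hwbai]
                by_cases hi3 : i.val < mi v
                · rw [mi_zero_of_lt (show i.val < mi v from hi3)]
                  split_ifs <;> omega
                · by_cases hi1 : i.val = mi v
                  · have h8 : i = (⟨mi v, hqn⟩ : Fin n) := Fin.ext hi1
                    subst h8
                    split_ifs <;> omega
                  · -- i.val > mi v = mi u - 1, so i.val ≥ mi u
                    split_ifs <;> omega
              rw [hwv_eq]
            · -- mlow ≥ 2 : strict at index mi v
              apply le_of_lt
              apply rk_lt_of_lex _ _ hdwv ⟨mi v, hqn⟩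
              · intro i hij
                have hiv : i.val < mi v := hij
                rw [hwbai, mi_zero_of_lt (show i.val < mi v from hiv)]
                split_ifs <;> omega
              · rw [hwbai]
                have hval : ((⟨mi v, hqn⟩ : Fin n) : ℕ) = mi v := rfl
                rw [hval]
                split_ifs <;> omega
        -- rk Z₀ ≤ rk (stepv u + v)
        have hZV : rk (stepv u + wba) ≤ rk (stepv u + v) := by
          rw [add_comm (stepv u) wba, add_comm (stepv u) v]
          exact rk_add_mono wba v (stepv u) hdwv hwv
        -- stepv u + v not in T
        have hsuv : ¬ inT d (stepv u + v) := by
          rw [inT, not_lt]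
          have h1 : d (degv (u + wb)) ≤ rk (u + wb) := by
            rw [inT, not_lt] at hU; exact hU
          have hdeq : degv (stepv u + v) = degv (u + wb) := by
            rw [degv_add, degv_add, hdegwb, degv_stepv hu (by omega), hdegv]
          rw [hdeq]
          omega
        -- now the chain
        have huvT : ¬ inT d (u + v) := not_inT_add hpos hd0 hd hT v
        have hA2 := stepv_add_right hv (fun i hi => mi_zero_of_lt (show i.val < mi u by omega))
        have hstv_ne : stepv v ≠ 0 := by
          apply ne_zero_of_degv_pos
          rw [degv_stepv hv (by omega)]
          exact degv_pos_of_ne_zero hv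
        have hmuv : muv (stepv v) ≤ m := by
          have := muv_stepv hv (show mi v + 1 < n by omega)
          omega
        have hA3 := ih u (stepv v) hmuv hT hstv_ne
        have hA5pre := stepv_add_right (u := stepv u) hv
          (fun i hi => stepv_zero_below (show i.val < mi u by omega))
        calc phi d (u + v) = phi d (stepv (u + v)) := by
              rw [phi_eq hpos hd0 (u + v), if_neg huvT]
          _ = phi d (u + stepv v) := by rw [hA2.2]
          _ = phi d (stepv u + stepv v) := hA3
          _ = phi d (stepv (stepv u + v)) := by rw [hA5pre.2]
          _ = phi d (stepv u + v) := by
              conv_rhs => rw [phi_eq hpos hd0 (stepv u + v), if_neg hsuv]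

include hpos hd0 hd in
/-- P : `phi` is multiplicative with respect to the congruence it defines. -/
lemma phi_phi_add (u v : Fin n → ℕ) (hv : v ≠ 0) :
    phi d (phi d u + v) = phi d (u + v) := by
  obtain ⟨m, hm⟩ : ∃ m, muv u ≤ m := ⟨muv u, le_refl _⟩
  induction m generalizing u with
  | zero =>
      by_cases hT : inT d u
      · rw [phi_of_inT hpos hd0 hT]
      · exfalso
        obtain ⟨hu, hlt⟩ := not_inT_struct hpos hd0 hT
        have := muv_stepv hu hlt
        omega
  | succ m ih =>
      by_cases hT : inT d u
      · rw [phi_of_inT hpos hd0 hT]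
      · obtain ⟨hu, hlt⟩ := not_inT_struct hpos hd0 hT
        have h1 := muv_stepv hu hlt
        have h2 : phi d u = phi d (stepv u) := by
          rw [phi_eq hpos hd0 u, if_neg hT]
        rw [h2, ih (stepv u) (by omega),
          phi_step_add hpos hd0 hd (muv v) u v (le_refl _) hT hv]

lemma rk_inj {u v : Fin n → ℕ} (hdeg : degv u = degv v) (hrk : rk u = rk v) : u = v := by
  by_contra hne
  obtain ⟨w, hw⟩ : ∃ w : Fin n → ℕ, w = fun i => (u i - v i) + (v i - u i) := ⟨_, rfl⟩
  have hwi : ∀ i : Fin n, w i = (u i - v i) + (v i - u i) := fun i => by rw [hw]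
  have hwne : w ≠ 0 := by
    intro hc
    apply hne
    funext i
    have h0 : w i = 0 := by rw [hc]; rfl
    rw [hwi] at h0
    omega
  have hmilt := mi_lt hwne
  have hdiff : u ⟨mi w, hmilt⟩ ≠ v ⟨mi w, hmilt⟩ := by
    have h1 : w ⟨mi w, hmilt⟩ ≠ 0 := mi_apply_ne hwne (by simp)
    rw [hwi] at h1
    omega
  have hbelow : ∀ i : Fin n, i.val < mi w → u i = v i := by
    intro i hi
    have h0 : w i = 0 := mi_zero_of_lt hi
    rw [hwi] at h0
    omega
  rcases lt_or_gt_of_ne hdiff with h | h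
  · have := rk_lt_of_lex u v hdeg ⟨mi w, hmilt⟩ (fun j hj => hbelow j hj) h
    omega
  · have := rk_lt_of_lex v u hdeg.symm ⟨mi w, hmilt⟩ (fun j hj => (hbelow j hj).symm) h
    omega

lemma degv_eq_one {u : Fin n → ℕ} (hu : degv u = 1) : ∃ j : Fin n, u = Pi.single j 1 := by
  obtain ⟨j, hj⟩ := exists_ne_of_ne_zero (ne_zero_of_degv_pos (u := u) (by omega))
  refine ⟨j, ?_⟩
  have hji : u j ≤ degv u := Finset.single_le_sum (fun k _ => Nat.zero_le (u k)) (Finset.mem_univ j)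
  have huj : u j = 1 := by omega
  funext i
  rcases eq_or_ne i j with rfl | hij
  · rw [huj, Pi.single_apply, if_pos rfl]
  · rw [Pi.single_apply, if_neg hij]
    have hsub : ({i, j} : Finset (Fin n)) ⊆ Finset.univ := Finset.subset_univ _
    have hsum : u i + u j ≤ degv u := by
      rw [degv]
      calc u i + u j = ∑ k ∈ ({i, j} : Finset (Fin n)), u k :=
            (Finset.sum_pair hij).symm
        _ ≤ ∑ k, u k := Finset.sum_le_sum_of_subset hsub
    omega

end Dyn

/-! ### Final assembly -/

section Final

variable (d : ℕ → ℕ)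

/-- The carrier of the semigroup. -/
def GG : Type := {u : Fin (d 1) → ℕ // 1 ≤ degv u ∧ rk u < d (degv u)}

variable (hpos : ∀ i : ℕ, 1 ≤ d i) (hd0 : d 0 = 1)
  (hd : ∀ i : ℕ, 1 ≤ i → d (i + 1) ≤ macaulay i (d i))

include hpos hd in
lemma d_le_N : ∀ h : ℕ, 1 ≤ h → d h ≤ Nn h (d 1) := by
  intro h h1
  induction h with
  | zero => omega
  | succ h ih =>
      rcases Nat.eq_zero_or_pos h with rfl | hh
      · rw [Nn_one_left]
      · calc d (h + 1) ≤ macaulay h (d h) := hd h hh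
          _ ≤ macaulay h (Nn h (d 1)) := mac_mono (ih hh)
          _ = Nn (h + 1) (d 1) := mac_Nn hh (hpos 1)

include hpos hd0 in
lemma addGG_mem (x y : GG d) :
    1 ≤ degv (phi d (x.1 + y.1)) ∧ rk (phi d (x.1 + y.1)) < d (degv (phi d (x.1 + y.1))) := by
  obtain ⟨hT, hdeg⟩ := phi_spec hpos hd0 (x.1 + y.1)
  constructor
  · rw [hdeg, degv_add]
    have := x.2.1
    omega
  · exact hT

/-- addition on the carrier -/
noncomputable def addGG (x y : GG d) : GG d :=
  ⟨phi d (x.1 + y.1), addGG_mem d hpos hd0 x y⟩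

include hpos hd0 hd in
lemma addGG_assoc (x y z : GG d) :
    addGG d hpos hd0 (addGG d hpos hd0 x y) z = addGG d hpos hd0 x (addGG d hpos hd0 y z) := by
  apply Subtype.ext
  show phi d (phi d (x.1 + y.1) + z.1) = phi d (x.1 + phi d (y.1 + z.1))
  have hz : z.1 ≠ 0 := ne_zero_of_degv_pos z.2.1
  have hx : x.1 ≠ 0 := ne_zero_of_degv_pos x.2.1
  rw [phi_phi_add hpos hd0 hd _ _ hz]
  rw [add_comm x.1 (phi d (y.1 + z.1)), phi_phi_add hpos hd0 hd _ _ hx]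
  congr 1
  rw [add_comm (y.1 + z.1) x.1, add_assoc]

/-- the commutative semigroup structure -/
noncomputable def semiGG : AddCommSemigroup (GG d) where
  add := addGG d hpos hd0
  add_assoc := addGG_assoc d hpos hd0 hd
  add_comm := fun x y => Subtype.ext (by
    show phi d (x.1 + y.1) = phi d (y.1 + x.1)
    rw [add_comm])

end Final

end Stmt16

open Stmt16

/-- Sharp realization (main theorem). Let `(d_i)_{i≥0}` be a sequence of positive
integers with `d_0 = 1` and `1 ≤ d_{i+1} ≤ d_i^⟨i⟩` for all `i ≥ 1`. Then there exists
an abelian semigroup `G` and a finite subset `A ⊆ G` such that `d_h = |hA|` for all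
`h ≥ 1` (for `h = 0`, `0A` is a singleton, matching `d_0 = 1`). -/
theorem stmt16 (d : ℕ → ℕ) (hpos : ∀ i : ℕ, 1 ≤ d i) (hd0 : d 0 = 1)
    (hd : ∀ i : ℕ, 1 ≤ i → d (i + 1) ≤ macaulay i (d i)) :
    ∃ (G : Type) (iG : AddCommSemigroup G) (A : Set G), A.Finite ∧
      ∀ h : ℕ, 1 ≤ h → Nat.card (@iterSumset G iG A h) = d h := by
  classical
  refine ⟨GG d, semiGG d hpos hd0 hd, {x : GG d | degv x.1 = 1}, ?_, ?_⟩
  · -- finiteness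
    have hsub : {x : GG d | degv x.1 = 1} ⊆
        (fun j : Fin (d 1) => (⟨Pi.single j 1, by
          constructor
          · rw [degv_single]
          · rw [degv_single]
            have h1 := rk_lt (Pi.single j (1:ℕ))
            rw [degv_single, Nn_one_left] at h1
            exact h1⟩ : GG d)) '' Set.univ := by
      intro x hx
      obtain ⟨j, hj⟩ := degv_eq_one hx
      exact ⟨j, Set.mem_univ j, by
        apply Subtype.ext
        exact hj.symm⟩
    exact Set.Finite.subset (Set.Finite.image _ Set.finite_univ) hsub
  · -- cardinalities
    intro h hh
    letI iG := semiGG d hpos hd0 hd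
    set A : Set (GG d) := {x : GG d | degv x.1 = 1} with hA
    -- iterSumset computation
    have hlevel : ∀ k : ℕ, iterSumset A (k + 1) = {x : GG d | degv x.1 = k + 1} := by
      intro k
      induction k with
      | zero => rfl
      | succ k ih =>
          show iterSumset A (k + 1) + A = _
          rw [ih]
          ext z
          simp only [Set.mem_add, Set.mem_setOf_eq]
          constructor
          · rintro ⟨s, hs, t, ht, rfl⟩
            show degv (phi d (s.1 + t.1)) = k + 2
            obtain ⟨_, hdeg⟩ := phi_spec hpos hd0 (s.1 + t.1)
            rw [hdeg, degv_add, hs, ht]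
          · intro hz
            have hzne : z.1 ≠ 0 := ne_zero_of_degv_pos z.2.1
            obtain ⟨j, hj⟩ := exists_ne_of_ne_zero hzne
            obtain ⟨u', hu'⟩ : ∃ u' : Fin (d 1) → ℕ,
                u' = fun i => if i = j then z.1 i - 1 else z.1 i := ⟨_, rfl⟩
            have hsplit : z.1 = u' + Pi.single j 1 := by
              funext i
              simp only [hu', Pi.add_apply, Pi.single_apply]
              by_cases hi : i = j
              · subst hi; rw [if_pos rfl, if_pos rfl]; omega
              · rw [if_neg hi, if_neg hi]; omega
            have hdu' : degv u' = k + 1 := by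
              have hda := degv_add u' (Pi.single j 1)
              rw [← hsplit, degv_single, hz] at hda
              omega
            have hu'T : rk u' < d (degv u') := by
              by_contra hc
              have h2 := not_inT_single hpos hd0 hd (show ¬ inT d u' from hc) j
              rw [← hsplit] at h2
              exact h2 z.2.2
            refine ⟨⟨u', by omega, hu'T⟩, hdu', ?_⟩
            refine ⟨⟨Pi.single j 1, ?_, ?_⟩, ?_, ?_⟩
            · rw [degv_single]
            · rw [degv_single]
              have h1 := rk_lt (Pi.single j (1:ℕ))
              rw [degv_single, Nn_one_left] at h1
              exact h1
            · show degv (Pi.single j (1:ℕ)) = 1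
              rw [degv_single]
            · apply Subtype.ext
              show phi d (u' + Pi.single j 1) = z.1
              rw [← hsplit]
              exact phi_of_inT hpos hd0 z.2.2
    obtain ⟨k, rfl⟩ : ∃ k, h = k + 1 := ⟨h - 1, by omega⟩
    rw [hlevel k]
    -- counting
    have e1 : {x : GG d | degv x.1 = k + 1} ≃
        {u : Fin (d 1) → ℕ // degv u = k + 1 ∧ rk u < d (k + 1)} :=
      { toFun := fun x => ⟨x.1.1, x.2, by
          have h1 := x.1.2.2
          have h2 : degv x.1.1 = k + 1 := x.2
          rwa [h2] at h1⟩
        invFun := fun y => ⟨⟨y.1, by rw [y.2.1]; omega, by rw [y.2.1]; exact y.2.2⟩, y.2.1⟩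
        left_inv := fun x => Subtype.ext (Subtype.ext rfl)
        right_inv := fun y => Subtype.ext rfl }
    have e2 : {u : Fin (d 1) → ℕ // degv u = k + 1 ∧ rk u < d (k + 1)} ≃ Fin (d (k + 1)) := by
      apply Equiv.ofBijective (fun u => (⟨rk u.1, u.2.2⟩ : Fin (d (k + 1))))
      constructor
      · intro a b hab
        apply Subtype.ext
        apply rk_inj (a.2.1.trans b.2.1.symm)
        exact congrArg Fin.val hab
      · intro a
        have ha : (a : ℕ) < Nn (k + 1) (d 1) :=
          lt_of_lt_of_le a.2 (d_le_N d hpos hd (k + 1) (by omega))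
        obtain ⟨u, hud, hur⟩ := rk_surj (k + 1) a ha
        exact ⟨⟨u, hud, by have h9 := a.2; omega⟩, by
          apply Fin.ext
          show rk u = a
          exact hur⟩
    calc Nat.card {x : GG d | degv x.1 = k + 1}
        = Nat.card (Fin (d (k + 1))) := Nat.card_congr (e1.trans e2)
      _ = d (k + 1) := by simp
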